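/- arXiv:1303.2435 — 10 statements merged into one kernel-verified Lean document; each statement's English description precedes it below -/
import Mathlib

section
/- Let $X$ be a topological space and $k$ a non-Archimedean valued field with non-trivial valuation. A subset $F \subset X$ is a countable intersection of clopen subsets of $X$ if and only if there exists a bounded continuous function $f \colon X \to k$ with $F = f^{-1}(\{0\})$. -/
theorem stmt_1 {X k : Type*} [TopologicalSpace X] [NormedField k] [IsUltrametricDist k]
    [CompleteSpace k] (hk : ∃ a : k, 0 < ‖a‖ ∧ ‖a‖ < 1) (F : Set X) :
    (∃ 𝒰 : Set (Set X), 𝒰.Countable ∧ (∀ V ∈ 𝒰, IsClopen V) ∧ F = ⋂₀ 𝒰) ↔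
      (∃ f : X → k, Continuous f ∧ (∃ C : ℝ, ∀ x, ‖f x‖ ≤ C) ∧ F = f ⁻¹' {0}) := by
  classical
  obtain ⟨a, ha0, ha1⟩ := hk
  have ha0' : a ≠ 0 := fun h => by simp [h] at ha0
  constructor
  · rintro ⟨𝒰, hcount, hclopen, rfl⟩
    rcases Set.eq_empty_or_nonempty 𝒰 with h | h
    · exact ⟨fun _ => 0, continuous_const, ⟨0, fun x => by simp⟩, by simp [h]⟩
    obtain ⟨V, rfl⟩ := hcount.exists_eq_range h
    set g : ℕ → X → k := fun n x => if x ∈ V n then 0 else a ^ n with hg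
    have hVclopen : ∀ n, IsClopen (V n) := fun n => hclopen _ ⟨n, rfl⟩
    have hnorm : ∀ n x, ‖g n x‖ ≤ ‖a‖ ^ n := by
      intro n x
      simp only [hg]
      split
      · simp [pow_nonneg ha0.le]
      · simp [norm_pow]
    have hsum : Summable (fun n => ‖a‖ ^ n) := summable_geometric_of_lt_one ha0.le ha1
    have hsummable : ∀ x, Summable (fun n => g n x) := fun x =>
      Summable.of_norm_bounded hsum (fun n => hnorm n x)
    refine ⟨fun x => ∑' n, g n x, ?_, ⟨1, ?_⟩, ?_⟩
    · refine continuous_tsum (fun n => ?_) hsum (fun n x => hnorm n x)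
      refine Continuous.if (fun x hx => ?_) continuous_const continuous_const
      have he : frontier {x | x ∈ V n} = ∅ := by
        simpa using isClopen_iff_frontier_eq_empty.mp (hVclopen n)
      rw [he] at hx
      exact absurd hx (Set.notMem_empty x)
    · intro x
      refine IsUltrametricDist.norm_tsum_le_of_forall_le_of_nonneg zero_le_one fun n => ?_
      exact (hnorm n x).trans (pow_le_one₀ ha0.le ha1.le)
    · ext x
      simp only [Set.mem_sInter, Set.mem_range, Set.mem_preimage, Set.mem_singleton_iff,
        forall_exists_index]
      constructor
      · rintro hmem
        have hz : ∀ n, g n x = 0 := fun n => if_pos (hmem _ n rfl)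
        simp [hz, tsum_zero]
      · intro hzero W n hW
        subst hW
        by_contra hx
        -- let m be minimal with x ∉ V m
        have hex : ∃ m, x ∉ V m := ⟨n, hx⟩
        set m := Nat.find hex with hm
        have hxm : x ∉ V m := Nat.find_spec hex
        have hlt : ∀ i < m, x ∈ V i := fun i hi => by
          by_contra hc; exact absurd (Nat.find_le hc) (not_le.mpr hi)
        have hsplit : (∑ i ∈ Finset.range (m + 1), g i x) + ∑' i, g (i + (m + 1)) x
            = ∑' i, g i x := Summable.sum_add_tsum_nat_add (m + 1) (hsummable x)
        have hfin : (∑ i ∈ Finset.range (m + 1), g i x) = a ^ m := by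
          rw [Finset.sum_range_succ]
          have : ∀ i ∈ Finset.range m, g i x = 0 := fun i hi =>
            if_pos (hlt i (Finset.mem_range.mp hi))
          rw [Finset.sum_eq_zero this, zero_add]
          exact if_neg hxm
        have htail : ‖∑' i, g (i + (m + 1)) x‖ ≤ ‖a‖ ^ (m + 1) := by
          refine IsUltrametricDist.norm_tsum_le_of_forall_le_of_nonneg
            (pow_nonneg ha0.le _) fun i => ?_
          exact (hnorm _ x).trans (pow_le_pow_of_le_one ha0.le ha1.le
            (by omega))
        have hlt2 : ‖∑' i, g (i + (m + 1)) x‖ < ‖(a : k) ^ m‖ := by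
          rw [norm_pow]
          exact htail.trans_lt (pow_lt_pow_right_of_lt_one₀ ha0 ha1 (Nat.lt_succ_self m))
        have hmax := IsUltrametricDist.norm_add_eq_max_of_norm_ne_norm
          (x := (a : k) ^ m) (y := ∑' i, g (i + (m + 1)) x) hlt2.ne'
        rw [hfin] at hsplit
        rw [hsplit, hzero, norm_zero] at hmax
        have hpos : (0 : ℝ) < ‖(a : k) ^ m‖ := by rw [norm_pow]; exact pow_pos ha0 m
        have hle0 : ‖(a : k) ^ m‖ ≤ (0 : ℝ) := hmax ▸ le_max_left _ _
        linarith
  · rintro ⟨f, hf, -, rfl⟩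
    refine ⟨Set.range (fun n : ℕ => f ⁻¹' Metric.closedBall 0 (‖a‖ ^ n)),
      Set.countable_range _, ?_, ?_⟩
    · rintro W ⟨n, rfl⟩
      exact (IsUltrametricDist.isClopen_closedBall (0 : k)
        (pow_ne_zero n ha0.ne')).preimage hf
    · ext x
      simp only [Set.mem_preimage, Set.mem_singleton_iff, Set.mem_sInter, Set.mem_range,
        forall_exists_index, Metric.mem_closedBall, dist_zero_right]
      constructor
      · rintro h W n rfl
        simp [Set.mem_preimage, h, Metric.mem_closedBall, pow_nonneg ha0.le]
      · intro h
        have hle : ∀ n : ℕ, ‖f x‖ ≤ ‖a‖ ^ n := fun n => by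
          have := h _ n rfl
          simpa [Metric.mem_closedBall, dist_zero_right] using this
        have h0 : ‖f x‖ ≤ 0 :=
          ge_of_tendsto (tendsto_pow_atTop_nhds_zero_of_lt_one ha0.le ha1)
            (Filter.Eventually.of_forall hle)
        simpa using le_antisymm h0 (norm_nonneg _)
end

section
/- Let $X$ be a totally disconnected locally compact Hausdorff space and $k$ a non-Archimedean valued field with non-trivial valuation. A point $x \in X$ is a P-point of $X$ if and only if for every bounded continuous function $f \colon X \to k$ with $f(x) = 0$, the zero locus $f^{-1}(\{0\})$ is a neighbourhood of $x$ in $X$. -/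
/-- A point `x` is a P-point if the intersection of any countable family of
neighbourhoods of `x` is again a neighbourhood of `x`. -/
def IsPPoint {X : Type*} [TopologicalSpace X] (x : X) : Prop :=
  ∀ 𝒰 : Set (Set X), 𝒰.Countable → (∀ U ∈ 𝒰, U ∈ nhds x) → ⋂₀ 𝒰 ∈ nhds x

theorem stmt_4 {X k : Type*} [TopologicalSpace X] [TotallyDisconnectedSpace X]
    [LocallyCompactSpace X] [T2Space X] [NormedField k] [IsUltrametricDist k]
    (hk : ∃ a : k, 0 < ‖a‖ ∧ ‖a‖ < 1) (x : X) :
    IsPPoint x ↔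
      ∀ f : X → k, Continuous f → (∃ C : ℝ, ∀ y, ‖f y‖ ≤ C) → f x = 0 →
        f ⁻¹' {0} ∈ nhds x := by
  obtain ⟨a, ha0, ha1⟩ := hk
  have haz : a ≠ 0 := fun h => by simp [h] at ha0
  constructor
  · -- easy direction
    intro hP f hf _ hfx
    have hmem : ∀ n : ℕ, f ⁻¹' {z : k | ‖z‖ < 1 / (n + 1)} ∈ nhds x := by
      intro n
      refine (isOpen_lt (by fun_prop) continuous_const).preimage hf |>.mem_nhds ?_
      simp only [Set.mem_preimage, Set.mem_setOf_eq, hfx, norm_zero]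
      positivity
    have key := hP (Set.range fun n : ℕ => f ⁻¹' {z : k | ‖z‖ < 1 / (n + 1)})
      (Set.countable_range _) (by rintro U ⟨n, rfl⟩; exact hmem n)
    rw [Set.sInter_range] at key
    refine Filter.mem_of_superset key ?_
    intro y hy
    simp only [Set.mem_iInter, Set.mem_preimage, Set.mem_setOf_eq] at hy
    simp only [Set.mem_preimage, Set.mem_singleton_iff]
    by_contra hy0
    have hpos : 0 < ‖f y‖ := norm_pos_iff.mpr hy0
    obtain ⟨n, hn⟩ := exists_nat_one_div_lt hpos
    exact absurd (hy n) (by push_neg; exact_mod_cast hn.le)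
  · intro h 𝒰 hc hn
    rcases Set.eq_empty_or_nonempty 𝒰 with rfl | hne
    · simp
    obtain ⟨u, rfl⟩ := hc.exists_eq_range hne
    -- choose clopen neighbourhoods
    have hbasis := loc_compact_Haus_tot_disc_of_zero_dim (H := X)
    have hW : ∀ n : ℕ, ∃ W : Set X, IsClopen W ∧ x ∈ W ∧ W ⊆ u n := by
      intro n
      obtain ⟨W, hWb, hxW, hWu⟩ := hbasis.mem_nhds_iff.1 (hn (u n) ⟨n, rfl⟩)
      exact ⟨W, hWb, hxW, hWu⟩
    choose W hWc hWx hWu using hW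
    set V : ℕ → Set X := fun n => ⋂ m ∈ Finset.range (n + 1), W m with hV
    have hVc : ∀ n, IsClopen (V n) := fun n => isClopen_biInter_finset fun m _ => hWc m
    have hVx : ∀ n, x ∈ V n := fun n => Set.mem_biInter fun m _ => hWx m
    have hVmem : ∀ n y, y ∈ V n ↔ ∀ m ≤ n, y ∈ W m := by
      intro n y
      simp only [hV, Set.mem_iInter, Finset.mem_range]
      exact ⟨fun h' m hm => h' m (by omega), fun h' m hm => h' m (by omega)⟩
    have hVu : ∀ n, V n ⊆ u n := fun n y hy =>
      hWu n (((hVmem n y).1 hy) n le_rfl)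
    have hVanti : ∀ {m n : ℕ}, m ≤ n → V n ⊆ V m := by
      intro m n hmn y hy
      rw [hVmem] at hy ⊢
      exact fun i hi => hy i (hi.trans hmn)
    classical
    -- the function
    set f : X → k := fun y => if h : ∃ n, y ∉ V n then a ^ Nat.find h else 0 with hf
    have hval : ∀ y (hy : ∃ n, y ∉ V n), f y = a ^ Nat.find hy := fun y hy => dif_pos hy
    have hval0 : ∀ y, (∀ n, y ∈ V n) → f y = 0 := fun y hy =>
      dif_neg (by push_neg; exact hy)
    -- continuity
    have hfc : Continuous f := by
      rw [continuous_iff_continuousAt]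
      intro y
      by_cases hy : ∃ n, y ∉ V n
      · -- locally constant near y
        set M := Nat.find hy with hM
        have hyM : y ∉ V M := Nat.find_spec hy
        have hylt : ∀ m < M, y ∈ V m := fun m hm => not_not.mp (Nat.find_min hy hm)
        -- neighbourhood on which f is constant
        have : ∀ᶠ z in nhds y, f z = a ^ M := by
          rcases Nat.eq_zero_or_pos M with hM0 | hMpos
          · have hopen : IsOpen (V M)ᶜ := (hVc M).isClosed.isOpen_compl
            filter_upwards [hopen.mem_nhds hyM] with z hz
            have hz' : ∃ n, z ∉ V n := ⟨M, hz⟩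
            rw [hval z hz']
            congr 1
            have h1 : Nat.find hz' ≤ M := Nat.find_le hz
            omega
          · have hopen : IsOpen (V (M - 1) ∩ (V M)ᶜ) :=
              (hVc (M-1)).2.inter (hVc M).isClosed.isOpen_compl
            have hymem : y ∈ V (M - 1) ∩ (V M)ᶜ := ⟨hylt _ (by omega), hyM⟩
            filter_upwards [hopen.mem_nhds hymem] with z hz
            have hz' : ∃ n, z ∉ V n := ⟨M, hz.2⟩
            rw [hval z hz']
            congr 1
            have h1 : Nat.find hz' ≤ M := Nat.find_le hz.2
            have h2 : ¬ (Nat.find hz' ≤ M - 1) := by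
              intro hle
              exact (Nat.find_spec hz') (hVanti hle hz.1)
            omega
        have : f =ᶠ[nhds y] fun _ => a ^ M := this
        exact (this.trans (by simp [hval y hy, hM] : (fun _ : X => a ^ M) =ᶠ[nhds y] fun _ => f y)).continuousAt
      · -- y in all V n
        push_neg at hy
        rw [ContinuousAt, hval0 y hy, Metric.tendsto_nhds]
        intro ε hε
        obtain ⟨N, hN⟩ := exists_pow_lt_of_lt_one hε ha1
        have hVN : V N ∈ nhds y := (hVc N).2.mem_nhds (hy N)
        rw [Filter.eventually_iff_exists_mem]
        refine ⟨V N, hVN, fun z hz => ?_⟩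
        rw [dist_eq_norm, sub_zero]
        by_cases hz' : ∃ n, z ∉ V n
        · rw [hval z hz']
          have hNM : N < Nat.find hz' := by
            rcases lt_or_ge N (Nat.find hz') with h' | h'
            · exact h'
            · exact absurd (hVanti h' hz) (Nat.find_spec hz')
          calc ‖a ^ Nat.find hz'‖ = ‖a‖ ^ Nat.find hz' := norm_pow _ _
            _ ≤ ‖a‖ ^ N := pow_le_pow_of_le_one ha0.le ha1.le hNM.le
            _ < ε := hN
        · push_neg at hz'
          rw [hval0 z hz']
          simpa using hε
    have hfb : ∃ C : ℝ, ∀ y, ‖f y‖ ≤ C := by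
      refine ⟨1, fun y => ?_⟩
      by_cases hy : ∃ n, y ∉ V n
      · rw [hval y hy, norm_pow]
        exact pow_le_one₀ ha0.le ha1.le
      · push_neg at hy; rw [hval0 y hy]; simp
    have hfx : f x = 0 := hval0 x hVx
    have hzero : f ⁻¹' {0} ⊆ ⋂ n, V n := by
      intro y hy
      simp only [Set.mem_preimage, Set.mem_singleton_iff] at hy
      rw [Set.mem_iInter]
      by_contra hmem
      push_neg at hmem
      obtain ⟨N, hN⟩ := hmem
      have hy' : ∃ n, y ∉ V n := ⟨N, hN⟩
      rw [hval y hy'] at hy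
      exact pow_ne_zero _ haz hy
    refine Filter.mem_of_superset (h f hfc hfb hfx) (hzero.trans ?_)
    rw [Set.sInter_range]
    exact Set.iInter_mono fun n => hVu n
end

section
/- Let $X$ be a totally disconnected locally compact Hausdorff space, $k$ a non-Archimedean valued field with non-trivial valuation, and $x \in X$ a P-point of $X$. Then the maximal ideal $m_{k,x} = \{f \in C_{bd}(X,k) : f(x) = 0\}$ of the ring $C_{bd}(X,k)$ of bounded continuous $k$-valued functions is a minimal prime ideal (has height $0$). -/
/-- Evaluation of bounded continuous functions at a point, as a ring homomorphism. -/
def evalHom (X k : Type*) [TopologicalSpace X] [NormedField k] (x : X) :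
    BoundedContinuousFunction X k →+* k where
  toFun f := f x
  map_one' := rfl
  map_mul' _ _ := rfl
  map_zero' := rfl
  map_add' _ _ := rfl

/-- The indicator of a clopen set as a bounded continuous function. -/
noncomputable def clopenIndicator {X k : Type*} [TopologicalSpace X] [NormedField k]
    (V : Set X) (hV : IsClopen V) : BoundedContinuousFunction X k where
  toFun := V.indicator 1
  continuous_toFun := continuous_indicator (by simp [hV]) continuous_const.continuousOn
  map_bounded' := by
    refine ⟨2, fun a b => ?_⟩
    have h : ∀ y : X, ‖V.indicator (1 : X → k) y‖ ≤ 1 := by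
      intro y
      by_cases hy : y ∈ V <;> simp [Set.indicator, hy]
    calc dist (V.indicator 1 a) (V.indicator 1 b)
        ≤ ‖V.indicator (1 : X → k) a‖ + ‖V.indicator (1 : X → k) b‖ := dist_le_norm_add_norm _ _
      _ ≤ 2 := by linarith [h a, h b]

theorem stmt_5 {X k : Type*} [TopologicalSpace X] [TotallyDisconnectedSpace X]
    [LocallyCompactSpace X] [T2Space X] [NormedField k] [IsUltrametricDist k]
    (hk : ∃ a : k, 0 < ‖a‖ ∧ ‖a‖ < 1) (x : X) (hx : IsPPoint x) :
    ∀ p : Ideal (BoundedContinuousFunction X k), p.IsPrime →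
      p ≤ RingHom.ker (evalHom X k x) → p = RingHom.ker (evalHom X k x) := by
  intro p hp hple
  refine le_antisymm hple ?_
  intro f hf
  have hfx : f x = 0 := hf
  obtain ⟨a, ha0, ha1⟩ := hk
  -- countable family of neighbourhoods
  set 𝒰 : Set (Set X) := Set.range (fun n : ℕ => {y : X | ‖f y‖ < ‖a‖ ^ n}) with h𝒰
  have hnhds : ⋂₀ 𝒰 ∈ nhds x := by
    apply hx _ (Set.countable_range _)
    rintro U ⟨n, rfl⟩
    apply IsOpen.mem_nhds
    · exact isOpen_lt (by continuity) continuous_const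
    · simpa [hfx] using pow_pos ha0 n
  -- f vanishes on ⋂₀ 𝒰
  have hvanish : ∀ y ∈ ⋂₀ 𝒰, f y = 0 := by
    intro y hy
    have h : ∀ n : ℕ, ‖f y‖ < ‖a‖ ^ n := by
      intro n
      exact hy _ ⟨n, rfl⟩
    by_contra hne
    have hpos : 0 < ‖f y‖ := norm_pos_iff.mpr hne
    obtain ⟨n, hn⟩ := exists_pow_lt_of_lt_one hpos ha1
    exact absurd (h n) (not_lt.mpr hn.le)
  -- clopen neighbourhood inside
  obtain ⟨U, hUsub, hUopen, hxU⟩ := mem_nhds_iff.mp hnhds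
  obtain ⟨V, hVmem, hxV, hVU⟩ :=
    loc_compact_Haus_tot_disc_of_zero_dim.mem_nhds_iff.mp (hUopen.mem_nhds hxU)
  have hV : IsClopen V := hVmem
  set e : BoundedContinuousFunction X k := clopenIndicator V hV with he
  have hfe : f * e = 0 := by
    ext y
    rw [BoundedContinuousFunction.mul_apply]
    show f y * e y = 0
    by_cases hy : y ∈ V
    · rw [hvanish y (hUsub (hVU hy)), zero_mul]
    · have hz : e y = 0 := Set.indicator_of_notMem hy _
      rw [hz, mul_zero]
  have hfe_mem : f * e ∈ p := by rw [hfe]; exact p.zero_mem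
  rcases hp.mem_or_mem hfe_mem with h | h
  · exact h
  · exfalso
    have := hple h
    have hex : e x = 0 := this
    have hex1 : e x = 1 := Set.indicator_of_mem hxV _
    rw [hex] at hex1
    exact zero_ne_one hex1
end

section
/- Let $X$ be a totally disconnected locally compact Hausdorff space, $k$ a non-Archimedean valued field with non-trivial valuation, and $x \in X$. If the maximal ideal $m_{k,x} = \{f \in C_{bd}(X,k) : f(x) = 0\}$ has height $0$ in $C_{bd}(X,k)$, then for every $f \in m_{k,x}$ the zero locus $f^{-1}(\{0\})$ is a neighbourhood of $x$, i.e., $x$ is a P-point of $X$. -/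
theorem stmt_6 {X k : Type*} [TopologicalSpace X] [TotallyDisconnectedSpace X]
    [LocallyCompactSpace X] [T2Space X] [NormedField k] [IsUltrametricDist k]
    (hk : ∃ a : k, 0 < ‖a‖ ∧ ‖a‖ < 1) (x : X)
    (h : ∀ p : Ideal (BoundedContinuousFunction X k), p.IsPrime →
      p ≤ RingHom.ker (evalHom X k x) → p = RingHom.ker (evalHom X k x)) :
    (∀ f : BoundedContinuousFunction X k, f x = 0 →
      (fun y => f y) ⁻¹' {0} ∈ nhds x) ∧ IsPPoint x := by
  classical
  obtain ⟨a, ha0, ha1⟩ := hk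
  have hane : a ≠ 0 := by
    intro h'; rw [h'] at ha0; simp at ha0
  have part1 : ∀ f : BoundedContinuousFunction X k, f x = 0 →
      (fun y => f y) ⁻¹' {0} ∈ nhds x := by
    intro f hfx
    by_contra hZ
    let R := BoundedContinuousFunction X k
    let S : Submonoid R :=
      { carrier := {u | ∃ g : R, ∃ n : ℕ, g x ≠ 0 ∧ u = g * f ^ n}
        mul_mem' := by
          rintro p q ⟨g1, n1, hg1, rfl⟩ ⟨g2, n2, hg2, rfl⟩
          refine ⟨g1 * g2, n1 + n2, fun hc => ?_, by ring⟩
          rw [BoundedContinuousFunction.mul_apply] at hc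
          exact mul_ne_zero hg1 hg2 hc
        one_mem' := ⟨1, 0, one_ne_zero, by simp⟩ }
    have h0S : (0 : R) ∉ S := by
      rintro ⟨g, n, hg, h0⟩
      have hpt : ∀ y, g y * (f y) ^ n = 0 := by
        intro y
        have h1 : (g * f ^ n) y = (0 : R) y := by rw [← h0]
        rwa [BoundedContinuousFunction.mul_apply, BoundedContinuousFunction.pow_apply,
          BoundedContinuousFunction.coe_zero, Pi.zero_apply] at h1
      rcases Nat.eq_zero_or_pos n with rfl | hn
      · apply hg
        simpa using hpt x
      · apply hZ
        have hsub : {y | g y ≠ 0} ⊆ (fun y => f y) ⁻¹' {0} := by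
          intro y hy
          rcases mul_eq_zero.mp (hpt y) with h' | h'
          · exact absurd h' hy
          · simpa [Set.mem_preimage] using pow_eq_zero_iff hn.ne' |>.mp h'
        have hopen : IsOpen {y | g y ≠ 0} :=
          isOpen_ne_fun g.continuous continuous_const
        exact Filter.mem_of_superset (hopen.mem_nhds hg) hsub
    obtain ⟨p, hp, -, hdisj⟩ := Ideal.exists_le_prime_disjoint (⊥ : Ideal R) S
      (by
        rw [Set.disjoint_left]
        intro u hu huS
        rw [SetLike.mem_coe, Ideal.mem_bot] at hu
        exact h0S (hu ▸ huS))
    have hple : p ≤ RingHom.ker (evalHom X k x) := by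
      intro g hg
      by_contra hgk
      have hgx : g x ≠ 0 := by rw [RingHom.mem_ker] at hgk; exact hgk
      exact Set.disjoint_left.mp hdisj hg ⟨g, 0, hgx, by simp⟩
    have hpeq := h p hp hple
    have hfp : f ∈ p := by
      rw [hpeq]
      rw [RingHom.mem_ker]; exact hfx
    exact Set.disjoint_left.mp hdisj hfp ⟨1, 1, one_ne_zero, by simp⟩
  refine ⟨part1, ?_⟩
  intro 𝒰 hcount hnhds
  rcases Set.eq_empty_or_nonempty 𝒰 with rfl | hne
  · simp
  obtain ⟨U, rfl⟩ := hcount.exists_eq_range hne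
  have hV : ∀ n, ∃ V : Set X, IsClopen V ∧ x ∈ V ∧ V ⊆ U n := fun n =>
    loc_compact_Haus_tot_disc_of_zero_dim.mem_nhds_iff.mp
      (hnhds (U n) (Set.mem_range_self n))
  choose V hVclopen hxV hVU using hV
  set W : ℕ → Set X := fun n => ⋂ m ∈ Finset.range (n + 1), V m with hW
  have hWclopen : ∀ n, IsClopen (W n) := fun n =>
    isClopen_biInter_finset fun m _ => hVclopen m
  have hxW : ∀ n, x ∈ W n := fun n => Set.mem_iInter₂.mpr fun m _ => hxV m
  have hWmono : ∀ {m n : ℕ}, m ≤ n → W n ⊆ W m := by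
    intro m n hmn y hy
    rw [Set.mem_iInter₂] at hy ⊢
    intro i hi
    exact hy i (Finset.mem_range.mpr (lt_of_lt_of_le (Finset.mem_range.mp hi) (by omega)))
  have hWV : ∀ n, W n ⊆ V n := fun n hy => by
    intro hmem
    exact Set.mem_iInter₂.mp hmem n (Finset.mem_range.mpr (Nat.lt_succ_self n))
  set g : X → k := fun y =>
    if y ∈ ⋂ n, W n then 0 else a ^ sInf {n | y ∉ W n} with hg
  have hg_inter : ∀ y ∈ ⋂ n, W n, g y = 0 := fun y hy => if_pos hy
  have hg_not : ∀ y, y ∉ (⋂ n, W n) → g y = a ^ sInf {n | y ∉ W n} :=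
    fun y hy => if_neg hy
  have hSne : ∀ y, y ∉ (⋂ n, W n) → {n | y ∉ W n}.Nonempty := by
    intro y hy
    rw [Set.mem_iInter] at hy
    push_neg at hy
    exact hy
  have hbound : ∀ y, ‖g y‖ ≤ 1 := by
    intro y
    by_cases hy : y ∈ ⋂ n, W n
    · simp [hg_inter y hy]
    · rw [hg_not y hy, norm_pow]
      exact pow_le_one₀ (norm_nonneg a) ha1.le
  have hcont : Continuous g := by
    rw [continuous_iff_continuousAt]
    intro y
    by_cases hy : y ∈ ⋂ n, W n
    · rw [ContinuousAt, Metric.tendsto_nhds]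
      intro ε hε
      obtain ⟨n, hn⟩ := exists_pow_lt_of_lt_one hε ha1
      have hWny : W n ∈ nhds y := (hWclopen n).2.mem_nhds (Set.mem_iInter.mp hy n)
      filter_upwards [hWny] with z hz
      rw [hg_inter y hy, dist_zero_right]
      by_cases hzI : z ∈ ⋂ m, W m
      · simpa [hg_inter z hzI] using hε
      · rw [hg_not z hzI, norm_pow]
        have hlt : n < sInf {m | z ∉ W m} := by
          by_contra h'
          push_neg at h'
          exact (Nat.sInf_mem (hSne z hzI)) (hWmono h' hz)
        calc ‖a‖ ^ sInf {m | z ∉ W m} ≤ ‖a‖ ^ n :=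
              pow_le_pow_of_le_one (norm_nonneg a) ha1.le hlt.le
          _ < ε := hn
    · set N := sInf {n | y ∉ W n} with hN
      have hyN : y ∉ W N := Nat.sInf_mem (hSne y hy)
      set O : Set X := (W N)ᶜ ∩ ⋂ m ∈ Finset.range N, W m with hO
      have hOopen : IsOpen O :=
        ((hWclopen N).compl.isOpen).inter (isOpen_biInter_finset fun m _ => (hWclopen m).2)
      have hyO : y ∈ O := by
        refine ⟨hyN, Set.mem_iInter₂.mpr fun m hm => ?_⟩
        by_contra hc
        exact absurd (Nat.sInf_le hc) (not_le.mpr (Finset.mem_range.mp hm))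
      have hconst : ∀ z ∈ O, g z = a ^ N := by
        rintro z ⟨hz1, hz2⟩
        have hzI : z ∉ ⋂ n, W n := fun hc => hz1 (Set.mem_iInter.mp hc N)
        rw [hg_not z hzI]
        congr 1
        refine le_antisymm (Nat.sInf_le hz1) ?_
        by_contra hc
        push_neg at hc
        exact (Nat.sInf_mem (hSne z hzI))
          (Set.mem_iInter₂.mp hz2 _ (Finset.mem_range.mpr hc))
      have heq : g =ᶠ[nhds y] fun _ => a ^ N := by
        filter_upwards [hOopen.mem_nhds hyO] with z hz using hconst z hz
      exact (continuousAt_const (y := a ^ N)).congr heq.symm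
  set f : BoundedContinuousFunction X k :=
    BoundedContinuousFunction.ofNormedAddCommGroup g hcont 1 hbound with hf
  have hfx : f x = 0 := hg_inter x (Set.mem_iInter.mpr hxW)
  have hmem := part1 f hfx
  refine Filter.mem_of_superset hmem ?_
  intro z hz
  have hz0 : g z = 0 := hz
  have hzI : z ∈ ⋂ n, W n := by
    by_contra hc
    exact pow_ne_zero _ hane (by rw [← hg_not z hc]; exact hz0)
  rw [Set.sInter_range]
  exact Set.mem_iInter.mpr fun n => hVU n (hWV n (Set.mem_iInter.mp hzI n))
end

section
/- Let $X$ be a totally disconnected locally compact Hausdorff space, $k$ a complete non-Archimedean valued field, and $F \subset X$ a compact subset. Then the restriction map $C_{bd}(X,k) \to C(F,k)$, $f \mapsto f|_F$, is surjective; i.e., every continuous $k$-valued function on $F$ extends to a bounded continuous function on $X$. -/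
open Set Filter Topology

/-- In a totally disconnected locally compact Hausdorff space, between a compact set and an
open superset there is a compact clopen set. -/
lemma exists_clopen_compact_between' {X : Type*} [TopologicalSpace X] [TotallyDisconnectedSpace X]
    [LocallyCompactSpace X] [T2Space X] {K O : Set X} (hK : IsCompact K) (hO : IsOpen O)
    (hKO : K ⊆ O) : ∃ V : Set X, IsClopen V ∧ IsCompact V ∧ K ⊆ V ∧ V ⊆ O := by
  obtain ⟨L, hL, hKL, hLO⟩ := exists_compact_between hK hO hKO
  have hbasis := loc_compact_Haus_tot_disc_of_zero_dim (H := X)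
  have hW : ∀ x : K, ∃ W : Set X, IsClopen W ∧ (x : X) ∈ W ∧ W ⊆ interior L := by
    intro x
    obtain ⟨W, hW1, hW2, hW3⟩ := hbasis.mem_nhds_iff.1 (isOpen_interior.mem_nhds (hKL x.2))
    exact ⟨W, hW1, hW2, hW3⟩
  choose W hWclopen hWmem hWsub using hW
  obtain ⟨t, ht⟩ := hK.elim_finite_subcover W (fun x => (hWclopen x).2)
    (fun x hx => mem_iUnion.2 ⟨⟨x, hx⟩, hWmem ⟨x, hx⟩⟩)
  have hclopen : IsClopen (⋃ i ∈ t, W i) :=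
    Set.Finite.isClopen_biUnion t.finite_toSet (fun i _ => hWclopen i)
  refine ⟨⋃ i ∈ t, W i, hclopen, ?_, ht, ?_⟩
  · exact hL.of_isClosed_subset hclopen.1
      (iUnion₂_subset fun i _ => (hWsub i).trans interior_subset)
  · exact iUnion₂_subset fun i _ => (hWsub i).trans (interior_subset.trans hLO)

/-- Approximation lemma: a continuous function on a compact subset, bounded by `M`, admits a
continuous extension-up-to-`ε`, bounded by `M`. -/
lemma approx_extend {X k : Type*} [TopologicalSpace X] [TotallyDisconnectedSpace X]
    [LocallyCompactSpace X] [T2Space X] [NormedField k] [IsUltrametricDist k]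
    (F : Set X) (hF : IsCompact F) (g : F → k) (hg : Continuous g)
    (M : ℝ) (hM0 : 0 ≤ M) (hM : ∀ y, ‖g y‖ ≤ M) {ε : ℝ} (hε : 0 < ε) :
    ∃ f : X → k, Continuous f ∧ (∀ x, ‖f x‖ ≤ M) ∧ ∀ y : F, ‖f y - g y‖ ≤ ε := by
  classical
  haveI : CompactSpace F := isCompact_iff_compactSpace.mp hF
  set U : F → Set F := fun a => g ⁻¹' Metric.ball (g a) ε with hUdef
  have hUclopen : ∀ a, IsClopen (U a) := fun a =>
    (IsUltrametricDist.isClopen_ball (g a) ε).preimage hg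
  have hUmem : ∀ a, a ∈ U a := fun a => by
    simp [hUdef, Metric.mem_ball, hε]
  have hBsub : ∀ a, a ∈ U a := hUmem
  obtain ⟨t, ht⟩ := isCompact_univ.elim_finite_subcover U (fun a => (hUclopen a).2)
    (fun a _ => mem_iUnion.2 ⟨a, hUmem a⟩)
  set n := t.card with hn
  set a : Fin n → F := fun i => (t.equivFin.symm i : F) with ha
  set B : Fin n → Set F := fun i => U (a i) \ ⋃ j, ⋃ (_ : j < i), U (a j) with hB
  have hBclopen : ∀ i, IsClopen (B i) := by
    intro i
    exact (hUclopen (a i)).diff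
      (Set.Finite.isClopen_biUnion (Set.toFinite _) (fun j _ => hUclopen (a j)))
  have hKcpt : ∀ i, IsCompact (Subtype.val '' B i) := fun i =>
    ((hBclopen i).1.isCompact).image continuous_subtype_val
  have hDcpt : ∀ i, IsCompact (Subtype.val '' (B i)ᶜ) := fun i =>
    (((hBclopen i).2.isClosed_compl).isCompact).image continuous_subtype_val
  have hO : ∀ i, IsOpen ((Subtype.val '' (B i)ᶜ)ᶜ) := fun i => ((hDcpt i).isClosed).isOpen_compl
  have hKO : ∀ i, Subtype.val '' B i ⊆ (Subtype.val '' (B i)ᶜ)ᶜ := by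
    rintro i x ⟨y, hy, rfl⟩ ⟨z, hz, hzy⟩
    exact hz (by rwa [Subtype.coe_injective hzy])
  choose V hVclopen hVcpt hKV hVO using fun i =>
    exists_clopen_compact_between' (hKcpt i) (hO i) (hKO i)
  set W : Fin n → Set X := fun i => V i \ ⋃ j, ⋃ (_ : j < i), V j with hW
  have hWclopen : ∀ i, IsClopen (W i) := fun i =>
    (hVclopen i).diff (Set.Finite.isClopen_biUnion (Set.toFinite _) (fun j _ => hVclopen j))
  set f : X → k := fun x => ∑ i : Fin n, (W i).indicator (fun _ => g (a i)) x with hf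
  have hWnot : ∀ {x : X} {i j : Fin n}, x ∈ W i → j ≠ i → x ∉ W j := by
    intro x i j hxi hji hxj
    rcases lt_or_gt_of_ne hji with h | h
    · exact hxi.2 (mem_iUnion.2 ⟨j, mem_iUnion.2 ⟨h, hxj.1⟩⟩)
    · exact hxj.2 (mem_iUnion.2 ⟨i, mem_iUnion.2 ⟨h, hxi.1⟩⟩)
  have hval : ∀ (x : X) (i : Fin n), x ∈ W i → f x = g (a i) := by
    intro x i hx
    have : ∑ j : Fin n, (W j).indicator (fun _ => g (a j)) x
        = (W i).indicator (fun _ => g (a i)) x := by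
      refine Finset.sum_eq_single i (fun j _ hj => ?_) (fun hi => absurd (Finset.mem_univ i) hi)
      exact Set.indicator_of_notMem (hWnot hx hj) _
    calc f x = ∑ j : Fin n, (W j).indicator (fun _ => g (a j)) x := rfl
      _ = (W i).indicator (fun _ => g (a i)) x := this
      _ = g (a i) := Set.indicator_of_mem hx _
  refine ⟨f, ?_, ?_, ?_⟩
  · refine continuous_finset_sum Finset.univ (fun i _ => ?_)
    refine continuous_indicator ?_ continuous_const.continuousOn
    rw [isClopen_iff_frontier_eq_empty.1 (hWclopen i)]
    simp
  · intro x
    by_cases h : ∃ i, x ∈ W i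
    · obtain ⟨i, hi⟩ := h
      rw [hval x i hi]
      exact hM (a i)
    · push_neg at h
      have : f x = 0 :=
        Finset.sum_eq_zero fun j _ => Set.indicator_of_notMem (h j) _
      rw [this, norm_zero]
      exact hM0
  · intro y
    have hy : y ∈ ⋃ b ∈ t, U b := ht (mem_univ y)
    rw [mem_iUnion₂] at hy
    obtain ⟨b, hbt, hyb⟩ := hy
    set s : Finset (Fin n) := Finset.univ.filter (fun i => y ∈ U (a i)) with hs
    have hsne : s.Nonempty := by
      refine ⟨t.equivFin ⟨b, hbt⟩, ?_⟩
      simp only [hs, Finset.mem_filter, Finset.mem_univ, true_and, ha]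
      rw [Equiv.symm_apply_apply]
      exact hyb
    set i₀ := s.min' hsne with hi₀
    have hi₀U : y ∈ U (a i₀) := (Finset.mem_filter.1 (s.min'_mem hsne)).2
    have hlt : ∀ j, j < i₀ → y ∉ U (a j) := by
      intro j hj hyj
      exact absurd (s.min'_le j (by simp [hs, hyj])) (not_le.2 hj)
    have hyB : y ∈ B i₀ := by
      refine ⟨hi₀U, fun hmem => ?_⟩
      rw [mem_iUnion] at hmem
      obtain ⟨j, hmem⟩ := hmem
      rw [mem_iUnion] at hmem
      obtain ⟨hj, hyj⟩ := hmem
      exact hlt j hj hyj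
    have hyV : (y : X) ∈ V i₀ := hKV i₀ ⟨y, hyB, rfl⟩
    have hyW : (y : X) ∈ W i₀ := by
      refine ⟨hyV, fun hmem => ?_⟩
      rw [mem_iUnion] at hmem
      obtain ⟨j, hmem⟩ := hmem
      rw [mem_iUnion] at hmem
      obtain ⟨hj, hyVj⟩ := hmem
      exact (hVO j hyVj) ⟨y, fun hB' => hlt j hj hB'.1, rfl⟩
    rw [hval _ i₀ hyW]
    have : dist (g y) (g (a i₀)) < ε := by
      have := hi₀U
      rwa [hUdef, mem_preimage, Metric.mem_ball] at this
    rw [← dist_eq_norm, dist_comm]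
    exact this.le

theorem stmt_8 {X k : Type*} [TopologicalSpace X] [TotallyDisconnectedSpace X]
    [LocallyCompactSpace X] [T2Space X] [NormedField k] [IsUltrametricDist k]
    [CompleteSpace k] (F : Set X) (hF : IsCompact F)
    (g : F → k) (hg : Continuous g) :
    ∃ f : X → k, Continuous f ∧ (∃ C : ℝ, ∀ x, ‖f x‖ ≤ C) ∧ ∀ y : F, f y = g y := by
  classical
  haveI : CompactSpace F := isCompact_iff_compactSpace.mp hF
  set G : BoundedContinuousFunction F k := BoundedContinuousFunction.mkOfCompact ⟨g, hg⟩ with hG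
  set ι : C(F, X) := ⟨Subtype.val, continuous_subtype_val⟩ with hι
  set ρ : BoundedContinuousFunction X k → BoundedContinuousFunction F k :=
    fun f => f.compContinuous ι with hρ
  have ρ_apply : ∀ (f : BoundedContinuousFunction X k) (y : F), ρ f y = f (y : X) := by
    intro f y; simp [hρ, hι]
  have ρ_add : ∀ f h : BoundedContinuousFunction X k, ρ (f + h) = ρ f + ρ h := by
    intro f h
    ext y
    simp [ρ_apply]
  set ρhom : BoundedContinuousFunction X k →+ BoundedContinuousFunction F k :=
    AddMonoidHom.mk' ρ ρ_add with hρhom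
  have ρ_lip : LipschitzWith 1 ρ := by
    refine LipschitzWith.of_dist_le_mul fun f h => ?_
    simp only [NNReal.coe_one, one_mul]
    refine (BoundedContinuousFunction.dist_le dist_nonneg).2 fun y => ?_
    simpa [ρ_apply] using BoundedContinuousFunction.dist_coe_le_dist (f := f) (g := h) (y : X)
  have key : ∀ (h : BoundedContinuousFunction F k) (ε : ℝ), 0 < ε →
      ∃ u : BoundedContinuousFunction X k, ‖u‖ ≤ ‖h‖ ∧ ‖ρ u - h‖ ≤ ε := by
    intro h ε hε
    obtain ⟨u, uc, ub, ur⟩ := approx_extend F hF h h.continuous ‖h‖ (norm_nonneg h)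
      (fun y => h.norm_coe_le_norm y) hε
    refine ⟨BoundedContinuousFunction.ofNormedAddCommGroup u uc ‖h‖ ub, ?_, ?_⟩
    · exact (BoundedContinuousFunction.norm_le (norm_nonneg h)).2 ub
    · refine (BoundedContinuousFunction.norm_le hε.le).2 fun y => ?_
      simpa [ρ_apply] using ur y
  choose Uf hUf1 hUf2 using key
  have εp : ∀ m : ℕ, (0:ℝ) < (1/2) ^ m := fun m => pow_pos (by norm_num) m
  set r : ℕ → BoundedContinuousFunction F k :=
    fun m => Nat.rec G (fun p rp => rp - ρ (Uf rp ((1/2)^(p+1)) (εp (p+1)))) m with hr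
  set u : ℕ → BoundedContinuousFunction X k :=
    fun m => Uf (r m) ((1/2)^(m+1)) (εp (m+1)) with hu
  have hrsucc : ∀ m, r (m+1) = r m - ρ (u m) := fun m => rfl
  have hr0 : r 0 = G := rfl
  have hrb : ∀ m, ‖r (m+1)‖ ≤ (1/2)^(m+1) := by
    intro m
    rw [hrsucc m]
    rw [norm_sub_rev]
    exact hUf2 (r m) ((1/2)^(m+1)) (εp (m+1))
  have hub : ∀ m, ‖u m‖ ≤ ‖r m‖ := fun m => hUf1 (r m) ((1/2)^(m+1)) (εp (m+1))
  set C : ℝ := max ‖G‖ 1 with hC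
  have hC1 : (1:ℝ) ≤ C := le_max_right _ _
  have hrC : ∀ m, ‖r m‖ ≤ C * (1/2)^m := by
    intro m
    cases m with
    | zero =>
      have h0 : ‖r 0‖ = ‖G‖ := rfl
      rw [h0, pow_zero, mul_one]
      exact le_max_left _ _
    | succ p =>
      calc ‖r (p+1)‖ ≤ (1/2)^(p+1) := hrb p
        _ ≤ C * (1/2)^(p+1) := le_mul_of_one_le_left (le_of_lt (εp (p+1))) hC1
  have huC : ∀ m, ‖u m‖ ≤ C * (1/2)^m := fun m => (hub m).trans (hrC m)
  have hsummable : Summable u := by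
    refine Summable.of_norm_bounded (g := fun m => C * (1/2)^m) ?_ huC
    exact (summable_geometric_of_lt_one (by norm_num) (by norm_num)).mul_left C
  set f : BoundedContinuousFunction X k := ∑' m, u m with hfdef
  have hhs : HasSum u f := hsummable.hasSum
  have hhs2 : HasSum (fun m => ρhom (u m)) (ρhom f) :=
    hhs.map ρhom (ρ_lip.continuous)
  have htel : ∀ N, ∑ i ∈ Finset.range N, ρ (u i) = G - r N := by
    intro N
    induction N with
    | zero => simp [hr0]
    | succ p ih =>
      rw [Finset.sum_range_succ, ih, hrsucc p]
      abel
  have hrt : Tendsto (fun N => r N) atTop (𝓝 0) := by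
    refine squeeze_zero_norm hrC ?_
    have : Tendsto (fun N : ℕ => ((1:ℝ)/2)^N) atTop (𝓝 0) :=
      tendsto_pow_atTop_nhds_zero_of_lt_one (by norm_num) (by norm_num)
    simpa using this.const_mul C
  have h1 : Tendsto (fun N => ∑ i ∈ Finset.range N, ρ (u i)) atTop (𝓝 (ρhom f)) :=
    hhs2.tendsto_sum_nat
  have h2 : Tendsto (fun N => ∑ i ∈ Finset.range N, ρ (u i)) atTop (𝓝 G) := by
    have : Tendsto (fun N => G - r N) atTop (𝓝 (G - 0)) := tendsto_const_nhds.sub hrt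
    rw [sub_zero] at this
    refine this.congr fun N => (htel N).symm
  have hρf : ρ f = G := tendsto_nhds_unique h1 h2
  refine ⟨f, f.continuous, ⟨‖f‖, fun x => f.norm_coe_le_norm x⟩, ?_⟩
  intro y
  have := congrArg (fun h => h y) hρf
  simpa [ρ_apply, hG] using this
end

section
/- Let $X$ be a totally disconnected locally compact Hausdorff space and $k$ a local field (complete discretely valued field with finite residue field). Then $X$ is countable at infinity if and only if there exists a continuous function $f \colon X \to k$ that vanishes at infinity (the preimage of $\{a \in k : |a| \geq \epsilon\}$ is compact for every $\epsilon > 0$) and has no zero. -/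
open Set

lemma aux_clopen {X : Type*} [TopologicalSpace X] [TotallyDisconnectedSpace X]
    [LocallyCompactSpace X] [T2Space X] {K U : Set X} (hK : IsCompact K) (hU : IsOpen U)
    (hKU : K ⊆ U) : ∃ V : Set X, IsClopen V ∧ IsCompact V ∧ K ⊆ V ∧ V ⊆ U := by
  obtain ⟨L, hLc, hKL, hLU⟩ := exists_compact_between hK hU hKU
  have hW : ∀ x : X, x ∈ K → ∃ W : Set X, IsClopen W ∧ x ∈ W ∧ W ⊆ interior L := by
    intro x hx
    obtain ⟨W, hWc, hxW, hWL⟩ :=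
      loc_compact_Haus_tot_disc_of_zero_dim.exists_subset_of_mem_open (hKL hx) isOpen_interior
    exact ⟨W, hWc, hxW, hWL⟩
  choose W hWclopen hWmem hWsub using hW
  obtain ⟨t, ht⟩ := hK.elim_nhds_subcover' (fun x hx => W x hx)
    (fun x hx => (hWclopen x hx).2.mem_nhds (hWmem x hx))
  refine ⟨_, ?_, ?_, ht, ?_⟩
  · exact isClopen_biUnion_finset (fun (x : ↥K) _ => hWclopen x.1 x.2)
  · refine hLc.of_isClosed_subset (isClopen_biUnion_finset (fun (x : ↥K) _ => hWclopen x.1 x.2)).1 ?_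
    exact iUnion₂_subset fun (x : ↥K) _ => (hWsub x.1 x.2).trans interior_subset
  · exact (iUnion₂_subset fun (x : ↥K) _ => (hWsub x.1 x.2).trans interior_subset).trans hLU

theorem stmt_12 {X k : Type*} [TopologicalSpace X] [TotallyDisconnectedSpace X]
    [LocallyCompactSpace X] [T2Space X] [NormedField k] [IsUltrametricDist k]
    [CompleteSpace k]
    (hdisc : ∃ a : k, 0 < ‖a‖ ∧ ‖a‖ < 1 ∧ ∀ b : k, b ≠ 0 → ∃ n : ℤ, ‖b‖ = ‖a‖ ^ n)
    (hres : IsCompact {x : k | ‖x‖ ≤ 1}) :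
    (∃ K : ℕ → Set X, (∀ n, IsCompact (K n)) ∧ (∀ n, K n ⊆ interior (K (n + 1))) ∧
        ⋃ n, K n = Set.univ) ↔
      (∃ f : X → k, Continuous f ∧ (∀ ε : ℝ, 0 < ε → IsCompact {x : X | ε ≤ ‖f x‖}) ∧
        ∀ x, f x ≠ 0) := by
  classical
  obtain ⟨a, ha0, ha1, -⟩ := hdisc
  have hane : a ≠ 0 := by simpa using ha0.ne'
  constructor
  · rintro ⟨K, hKc, hKint, hKcov⟩
    have hV : ∀ n, ∃ V : Set X, IsClopen V ∧ IsCompact V ∧ K n ⊆ V ∧ V ⊆ interior (K (n + 1)) :=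
      fun n => aux_clopen (hKc n) isOpen_interior (hKint n)
    choose V hVclopen hVcomp hKV hVint using hV
    have hcov : ∀ x : X, ∃ n, x ∈ V n := by
      intro x
      have : x ∈ ⋃ n, K n := hKcov ▸ mem_univ x
      obtain ⟨n, hn⟩ := mem_iUnion.1 this
      exact ⟨n, hKV n hn⟩
    set N : X → ℕ := fun x => Nat.find (hcov x) with hN
    set f : X → k := fun x => a ^ N x with hfdef
    have hnorm : ∀ x, ‖f x‖ = ‖a‖ ^ N x := fun x => by rw [hfdef]; exact norm_pow a (N x)
    have hfc : Continuous f := by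
      apply IsLocallyConstant.continuous
      rw [IsLocallyConstant.iff_exists_open]
      intro x
      refine ⟨V (N x) \ ⋃ m ∈ Finset.range (N x), V m, ?_, ⟨Nat.find_spec (hcov x), ?_⟩, ?_⟩
      · exact (hVclopen (N x)).2.sdiff
          ((Finset.range (N x)).finite_toSet.isClosed_biUnion fun m _ => (hVclopen m).1)
      · simp only [mem_iUnion, Finset.mem_coe, Finset.mem_range, not_exists]
        exact fun m hm => Nat.find_min (hcov x) hm
      · rintro y ⟨hy1, hy2⟩
        simp only [mem_iUnion, Finset.mem_coe, Finset.mem_range, not_exists] at hy2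
        have : N y = N x := by
          rw [hN, Nat.find_eq_iff]
          exact ⟨hy1, hy2⟩
        simp [hfdef, this]
    refine ⟨f, hfc, ?_, fun x => pow_ne_zero _ hane⟩
    intro ε hε
    obtain ⟨M, hM⟩ := exists_pow_lt_of_lt_one hε ha1
    have hclosed : IsClosed {x : X | ε ≤ ‖f x‖} :=
      isClosed_le continuous_const hfc.norm
    have hsub : {x : X | ε ≤ ‖f x‖} ⊆ ⋃ m ∈ Finset.range M, V m := by
      intro x hx
      have hxε : ε ≤ ‖a‖ ^ N x := by rw [← hnorm x]; exact hx
      have hNx : N x < M := by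
        by_contra h
        push_neg at h
        have : ‖a‖ ^ N x ≤ ‖a‖ ^ M := pow_le_pow_of_le_one ha0.le ha1.le h
        linarith
      exact mem_biUnion (Finset.mem_range.2 hNx) (Nat.find_spec (hcov x))
    exact ((Finset.range M).finite_toSet.isCompact_biUnion
      (fun m _ => hVcomp m)).of_isClosed_subset hclosed hsub
  · rintro ⟨f, hf, hcpt, hne⟩
    refine ⟨fun n => {x : X | 1 / (n + 1 : ℝ) ≤ ‖f x‖}, fun n => hcpt _ (by positivity), ?_, ?_⟩
    · intro n
      have hopen : IsOpen {x : X | 1 / (n + 2 : ℝ) < ‖f x‖} :=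
        isOpen_lt continuous_const hf.norm
      have hsub1 : {x : X | 1 / (n + 1 : ℝ) ≤ ‖f x‖} ⊆ {x : X | 1 / (n + 2 : ℝ) < ‖f x‖} := by
        intro x hx
        have h1 : (1 : ℝ) / (n + 2) < 1 / (n + 1) := by
          exact one_div_lt_one_div_of_lt (by positivity) (by linarith)
        exact lt_of_lt_of_le h1 hx
      have hsub2 : {x : X | 1 / (n + 2 : ℝ) < ‖f x‖} ⊆
          {x : X | 1 / ((n : ℝ) + 1 + 1) ≤ ‖f x‖} := by
        intro x hx
        have : (1 : ℝ) / ((n : ℝ) + 1 + 1) = 1 / (n + 2) := by ring_nf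
        rw [mem_setOf_eq, this]
        exact le_of_lt hx
      refine hsub1.trans (interior_maximal ?_ hopen)
      intro x hx
      have := hsub2 hx
      simpa using this
    · ext x
      simp only [mem_iUnion, mem_univ, iff_true, mem_setOf_eq]
      have hpos : 0 < ‖f x‖ := norm_pos_iff.2 (hne x)
      obtain ⟨n, hn⟩ := exists_nat_one_div_lt hpos
      exact ⟨n, le_of_lt hn⟩
end

section
/- Let $X$ be a totally disconnected compact Hausdorff space and $F \subset X$ a closed subset whose complement $X \setminus F$ is countable at infinity. Then every subset of $F$ that is a countable intersection of clopen subsets of $F$ is also a countable intersection of clopen subsets of $X$; in particular, the map $\mathrm{CO}_\delta(X) \to \mathrm{CO}_\delta(F)$, $U \mapsto U \cap F$, is surjective. -/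
lemma aux_clopen_between {X : Type*} [TopologicalSpace X] [TotallyDisconnectedSpace X]
    [CompactSpace X] [T2Space X] {K U : Set X} (hK : IsCompact K) (hU : IsOpen U)
    (hKU : K ⊆ U) : ∃ W : Set X, IsClopen W ∧ K ⊆ W ∧ W ⊆ U := by
  have h : ∀ x : K, ∃ W : Set X, IsClopen W ∧ (x : X) ∈ W ∧ W ⊆ U := fun x =>
    compact_exists_isClopen_in_isOpen hU (hKU x.2)
  choose W hWc hWx hWU using h
  obtain ⟨t, ht⟩ := hK.elim_finite_subcover (fun x : K => W x)
    (fun x => (hWc x).2) (fun x hx => Set.mem_iUnion.2 ⟨⟨x, hx⟩, hWx _⟩)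
  refine ⟨⋃ x ∈ t, W x, ?_, ht, Set.iUnion₂_subset fun x _ => hWU x⟩
  exact Set.Finite.isClopen_biUnion t.finite_toSet (fun x _ => hWc x)

theorem stmt_13 {X : Type*} [TopologicalSpace X] [TotallyDisconnectedSpace X]
    [CompactSpace X] [T2Space X] (F : Set X) (hF : IsClosed F)
    (hci : ∃ K : ℕ → Set X, (∀ n, IsCompact (K n)) ∧ (∀ n, K n ⊆ interior (K (n + 1))) ∧
      ⋃ n, K n = Fᶜ)
    (V : ℕ → Set F) (hV : ∀ n, IsClopen (V n)) :
    ∃ U : ℕ → Set X, (∀ n, IsClopen (U n)) ∧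
      Subtype.val '' (⋂ n, V n) = ⋂ n, U n := by
  obtain ⟨K, hKc, _, hKU⟩ := hci
  have hFc : IsCompact F := hF.isCompact
  -- extend each V n to a clopen W n of X
  haveI : CompactSpace F := isCompact_iff_compactSpace.mp hFc
  have hext : ∀ n, ∃ W : Set X, IsClopen W ∧ ∀ x : F, (x : X) ∈ W ↔ x ∈ V n := by
    intro n
    have hA : IsCompact (Subtype.val '' V n) :=
      (((hV n).1.isCompact).image continuous_subtype_val)
    have hB : IsCompact (Subtype.val '' (V n)ᶜ) :=
      (((hV n).2.isClosed_compl.isCompact).image continuous_subtype_val)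
    have hAB : Subtype.val '' V n ⊆ (Subtype.val '' (V n)ᶜ)ᶜ := by
      rintro x ⟨y, hy, rfl⟩ ⟨z, hz, hzy⟩
      exact hz (by rwa [Subtype.val_injective hzy])
    obtain ⟨W, hWc, hAW, hWB⟩ := aux_clopen_between hA hB.isClosed.isOpen_compl hAB
    refine ⟨W, hWc, fun x => ⟨fun hx => ?_, fun hx => hAW ⟨x, hx, rfl⟩⟩⟩
    by_contra hxV
    exact hWB hx ⟨x, hxV, rfl⟩
  choose W hWc hWF using hext
  -- clopen sets C n with K n ⊆ C n ⊆ Fᶜ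
  have hC : ∀ n, ∃ C : Set X, IsClopen C ∧ K n ⊆ C ∧ C ⊆ Fᶜ := by
    intro n
    exact aux_clopen_between (hKc n) hF.isOpen_compl
      (by rw [← hKU]; exact Set.subset_iUnion K n)
  choose C hCc hKC hCF using hC
  refine ⟨fun n => W n ∩ (C n)ᶜ, fun n => (hWc n).inter (hCc n).compl, ?_⟩
  ext x
  simp only [Set.mem_image, Set.mem_iInter, Set.mem_inter_iff, Set.mem_compl_iff]
  constructor
  · rintro ⟨y, hy, rfl⟩ n
    exact ⟨(hWF n y).2 (hy n), fun hxC => hCF n hxC y.2⟩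
  · intro hx
    have hxF : x ∈ F := by
      by_contra hxF
      obtain ⟨n, hn⟩ := Set.mem_iUnion.1 (show x ∈ ⋃ n, K n from hKU.symm ▸ hxF)
      exact (hx n).2 (hKC n hn)
    exact ⟨⟨x, hxF⟩, fun n => (hWF n ⟨x, hxF⟩).1 (hx n).1, rfl⟩
end

section
/- Let $X$ be a non-empty totally disconnected compact Hausdorff space such that, for every cardinal $\beta < \aleph_1$ (i.e., every countable cardinal), every non-empty intersection of at most $\beta$ clopen subsets of $X$ has an interior point. Then the intersection of any family of at most $\aleph_1$ dense open subsets of $X$ is non-empty. -/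
open Set

theorem stmt_15 {X : Type} [TopologicalSpace X] [TotallyDisconnectedSpace X]
    [CompactSpace X] [T2Space X] [Nonempty X]
    (h : ∀ (ι : Type) (_ : Countable ι) (U : ι → Set X), (∀ i, IsClopen (U i)) →
      (⋂ i, U i).Nonempty → (interior (⋂ i, U i)).Nonempty)
    (ι : Type) (hι : Cardinal.mk ι ≤ Cardinal.aleph 1)
    (V : ι → Set X) (hV : ∀ i, IsOpen (V i) ∧ Dense (V i)) :
    (⋂ i, V i).Nonempty := by
  classical
  set W := (Cardinal.aleph 1).ord.ToType with hWdef
  have hWne : Nonempty W := by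
    rw [hWdef, Ordinal.toType_nonempty_iff_ne_zero, ne_eq, Cardinal.ord_eq_zero]
    exact (Cardinal.aleph_pos 1).ne'
  have hWmk : Cardinal.mk W = Cardinal.aleph 1 := by
    rw [hWdef, Cardinal.mk_toType, Cardinal.card_ord]
  obtain ⟨f⟩ : Nonempty (ι ↪ W) := by
    rw [← Cardinal.le_def, hWmk]; exact hι
  -- countability of initial segments
  have hcnt : ∀ a : W, Countable (Set.Iio a) := by
    intro a
    have := Cardinal.mk_Iio_ord_toType (c := Cardinal.aleph 1) a
    rw [← Cardinal.countable_iff_lt_aleph_one] at this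
    exact this.to_subtype
  -- the dense open set assigned to each index in W
  let D : W → Set X := fun a => if h : ∃ i, f i = a then V h.choose else Set.univ
  have hDopen : ∀ a, IsOpen (D a) ∧ Dense (D a) := by
    intro a
    by_cases hex : ∃ i, f i = a
    · simp only [D, dif_pos hex]; exact hV _
    · simp only [D, dif_neg hex]; exact ⟨isOpen_univ, dense_univ⟩
  have hDV : ∀ i, D (f i) ⊆ V i := by
    intro i
    have hex : ∃ j, f j = f i := ⟨i, rfl⟩
    have : hex.choose = i := f.injective hex.choose_spec
    simp only [D, dif_pos hex, this]
    exact subset_rfl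
  -- key step: we can always continue the construction
  have key : ∀ (a : W) (C : W → Set X),
      (∀ b, b < a → IsClopen (C b) ∧ (C b).Nonempty ∧ ∀ c, c < b → C b ⊆ C c) →
      ∃ S : Set X, IsClopen S ∧ S.Nonempty ∧ S ⊆ D a ∧ ∀ b, b < a → S ⊆ C b := by
    intro a C hC
    by_cases hne : Nonempty (Set.Iio a)
    · -- the intersection of previous stages is nonempty by compactness
      have hdir : Directed (· ⊇ ·) (fun b : Set.Iio a => C b) := by
        intro b c
        rcases le_total (b : W) c with hbc | hbc
        · refine ⟨c, ?_, subset_rfl⟩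
          rcases lt_or_eq_of_le hbc with hlt | heq
          · exact (hC c c.2).2.2 b hlt
          · rw [Subtype.coe_injective heq]
        · refine ⟨b, subset_rfl, ?_⟩
          rcases lt_or_eq_of_le hbc with hlt | heq
          · exact (hC b b.2).2.2 c hlt
          · rw [Subtype.coe_injective heq]
      have hK : (⋂ b : Set.Iio a, C b).Nonempty :=
        IsCompact.nonempty_iInter_of_directed_nonempty_isCompact_isClosed
          (fun b : Set.Iio a => C b) hdir (fun b => (hC b b.2).2.1)
          (fun b => (hC b b.2).1.isClosed.isCompact) (fun b => (hC b b.2).1.isClosed)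
      have hint : (interior (⋂ b : Set.Iio a, C b)).Nonempty :=
        h (Set.Iio a) (hcnt a) (fun b => C b) (fun b => (hC b b.2).1) hK
      have hopen : IsOpen (interior (⋂ b : Set.Iio a, C b)) := isOpen_interior
      obtain ⟨x, hx1, hx2⟩ :=
        (hDopen a).2.inter_open_nonempty _ hopen hint
      obtain ⟨S, hScl, hxS, hSsub⟩ :=
        compact_exists_isClopen_in_isOpen (hopen.inter (hDopen a).1) ⟨hx1, hx2⟩
      refine ⟨S, hScl, ⟨x, hxS⟩, fun y hy => (hSsub hy).2, fun b hb y hy => ?_⟩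
      have : y ∈ ⋂ b : Set.Iio a, C b := interior_subset (hSsub hy).1
      exact Set.mem_iInter.1 this ⟨b, hb⟩
    · -- no previous stages: just pick a clopen subset of D a
      obtain ⟨x, hx⟩ : (D a).Nonempty := (hDopen a).2.nonempty
      obtain ⟨S, hScl, hxS, hSsub⟩ :=
        compact_exists_isClopen_in_isOpen (hDopen a).1 hx
      exact ⟨S, hScl, ⟨x, hxS⟩, hSsub, fun b hb => absurd ⟨⟨b, hb⟩⟩ hne⟩
  -- construct the decreasing family by well-founded recursion
  have wf : WellFounded ((· < ·) : W → W → Prop) := wellFounded_lt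
  let F : ∀ a : W, (∀ b : W, b < a → Set X) → Set X := fun a rec =>
    if h : ∃ S : Set X, IsClopen S ∧ S.Nonempty ∧ S ⊆ D a ∧ ∀ b (hb : b < a), S ⊆ rec b hb
    then h.choose else Set.univ
  let C : W → Set X := wf.fix F
  have hCeq : ∀ a : W, C a = F a (fun b _ => C b) := fun a => wf.fix_eq F a
  have hC : ∀ a : W, IsClopen (C a) ∧ (C a).Nonempty ∧ C a ⊆ D a ∧ ∀ b, b < a → C a ⊆ C b := by
    intro a
    induction a using wf.induction with
    | _ a IH =>
      have hex : ∃ S : Set X, IsClopen S ∧ S.Nonempty ∧ S ⊆ D a ∧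
          ∀ b (hb : b < a), S ⊆ C b := by
        obtain ⟨S, h1, h2, h3, h4⟩ := key a C (fun b hb => ⟨(IH b hb).1, (IH b hb).2.1,
          fun c hc => (IH b hb).2.2.2 c hc⟩)
        exact ⟨S, h1, h2, h3, fun b hb => h4 b hb⟩
      have : C a = hex.choose := by
        rw [hCeq a]; simp only [F, dif_pos hex]
      rw [this]
      obtain ⟨h1, h2, h3, h4⟩ := hex.choose_spec
      exact ⟨h1, h2, h3, fun b hb => h4 b hb⟩
  -- the intersection of the whole family is nonempty
  have hdir : Directed (· ⊇ ·) C := by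
    intro b c
    rcases le_total b c with hbc | hbc
    · refine ⟨c, ?_, subset_rfl⟩
      rcases lt_or_eq_of_le hbc with hlt | heq
      · exact (hC c).2.2.2 b hlt
      · rw [heq]
    · refine ⟨b, subset_rfl, ?_⟩
      rcases lt_or_eq_of_le hbc with hlt | heq
      · exact (hC b).2.2.2 c hlt
      · rw [heq]
  obtain ⟨x, hx⟩ : (⋂ a, C a).Nonempty :=
    IsCompact.nonempty_iInter_of_directed_nonempty_isCompact_isClosed
      C hdir (fun a => (hC a).2.1) (fun a => (hC a).1.isClosed.isCompact)
      (fun a => (hC a).1.isClosed)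
  refine ⟨x, Set.mem_iInter.2 fun i => ?_⟩
  exact hDV i ((hC (f i)).2.2.1 (Set.mem_iInter.1 hx (f i)))
end

section
/- Let $X$ be a totally disconnected compact Hausdorff space, $k$ a non-Archimedean valued field with non-trivial valuation, and suppose every prime ideal of the ring $C(X,k)$ of continuous $k$-valued functions is closed with respect to the supremum norm topology. If additionally every closed prime ideal of $C(X,k)$ is maximal and every maximal ideal is of the form $m_{k,x} = \{f : f(x) = 0\}$ for some $x \in X$, then $X$ is a finite set. -/
open Set Filter Topology

-- minimal prime annihilator lemma
lemma min_prime_ann {R : Type*} [CommRing R] {p : Ideal R}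
    (hp : p ∈ (⊥ : Ideal R).minimalPrimes) {f : R} (hf : f ∈ p) :
    ∃ s ∉ p, ∃ n : ℕ, s * f ^ n = 0 := by
  have hprime : p.IsPrime := hp.1.1
  by_contra hcon
  push_neg at hcon
  set S : Submonoid R :=
    { carrier := { t | ∃ s ∉ p, ∃ n : ℕ, t = s * f ^ n }
      one_mem' := ⟨1, hprime.1 ∘ (fun h => (Ideal.eq_top_iff_one p).2 h), 0, by ring⟩
      mul_mem' := by
        rintro x y ⟨s, hs, n, rfl⟩ ⟨s', hs', m, rfl⟩
        exact ⟨s * s', fun h => ((hprime.mem_or_mem h).elim hs hs'), n + m, by ring⟩ } with hS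
  have hdisj : Disjoint ((⊥ : Ideal R) : Set R) (S : Set R) := by
    rw [Set.disjoint_left]
    rintro x hx ⟨s, hs, n, rfl⟩
    simp only [SetLike.mem_coe, Ideal.mem_bot] at hx
    exact hcon s hs n hx
  obtain ⟨q, hq, -, hqdisj⟩ := Ideal.exists_le_prime_disjoint ⊥ S hdisj
  have hfq : f ∉ q := fun h =>
    Set.disjoint_left.1 hqdisj h ⟨1, hprime.1 ∘ (fun h => (Ideal.eq_top_iff_one p).2 h), 1, by ring⟩
  have hqp : q ≤ p := by
    intro t ht
    by_contra htp
    exact Set.disjoint_left.1 hqdisj ht ⟨t, htp, 0, by ring⟩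
  exact hfq (hp.2 ⟨hq, bot_le⟩ hqp hf)

-- clopen splitting lemma
lemma split_clopen {X : Type*} [TopologicalSpace X] [TotallyDisconnectedSpace X]
    [CompactSpace X] [T2Space X] {V : Set X} (hV : IsClopen V) (hVinf : V.Infinite) :
    ∃ W : Set X, IsClopen W ∧ W.Infinite ∧ W ⊆ V ∧ (V \ W).Nonempty := by
  obtain ⟨u, hu, v, hv, huv⟩ := hVinf.nontrivial
  have hopen : IsOpen (V \ {v}) := hV.isOpen.sdiff isClosed_singleton
  obtain ⟨W0, hW0, huW0, hW0sub⟩ :=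
    TopologicalSpace.IsTopologicalBasis.exists_subset_of_mem_open
      isTopologicalBasis_isClopen (show u ∈ V \ {v} from ⟨hu, huv⟩) hopen
  by_cases hfin : (V \ W0).Infinite
  · exact ⟨V \ W0, hV.diff hW0, hfin, Set.diff_subset, ⟨u, hu, fun h => h.2 huW0⟩⟩
  · rw [Set.not_infinite] at hfin
    refine ⟨W0, hW0, ?_, fun w hw => (hW0sub hw).1, ⟨v, hv, fun h => (hW0sub h).2 rfl⟩⟩
    have := hVinf.diff hfin
    exact this.mono (fun w hw => by
      by_contra h
      exact hw.2 ⟨hw.1, h⟩)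

/-- Evaluation of continuous functions at a point, as a ring homomorphism. -/
def cEvalHom (X k : Type*) [TopologicalSpace X] [NormedField k] (x : X) :
    ContinuousMap X k →+* k where
  toFun f := f x
  map_one' := rfl
  map_mul' _ _ := rfl
  map_zero' := rfl
  map_add' _ _ := rfl

theorem stmt_17 {X k : Type*} [TopologicalSpace X] [TotallyDisconnectedSpace X]
    [CompactSpace X] [T2Space X] [NormedField k] [IsUltrametricDist k]
    (hk : ∃ a : k, 0 < ‖a‖ ∧ ‖a‖ < 1)
    (hclosed : ∀ p : Ideal (ContinuousMap X k), p.IsPrime →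
      IsClosed (p : Set (ContinuousMap X k)))
    (hmax : ∀ p : Ideal (ContinuousMap X k), p.IsPrime →
      IsClosed (p : Set (ContinuousMap X k)) → p.IsMaximal)
    (heval : ∀ m : Ideal (ContinuousMap X k), m.IsMaximal →
      ∃ x : X, m = RingHom.ker (cEvalHom X k x)) :
    Finite X := by
  classical
  by_contra hfin
  rw [not_finite_iff_infinite] at hfin
  obtain ⟨a, ha0, ha1⟩ := hk
  have hane : a ≠ 0 := by simpa [norm_pos_iff] using ha0
  -- build nested clopen sequence
  have key : ∀ V : Set X, IsClopen V → V.Infinite →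
      ∃ W : Set X, IsClopen W ∧ W.Infinite ∧ W ⊆ V ∧ (V \ W).Nonempty :=
    fun V hV hVi => split_clopen hV hVi
  choose! step hstep1 hstep2 hstep3 hstep4 using key
  set V : ℕ → Set X := fun n => Nat.rec Set.univ (fun _ W => step W) n with hV
  have hV0 : V 0 = Set.univ := rfl
  have hVsucc : ∀ n, V (n + 1) = step (V n) := fun n => rfl
  have hVprop : ∀ n, IsClopen (V n) ∧ (V n).Infinite := by
    intro n
    induction n with
    | zero => exact ⟨isClopen_univ, Set.infinite_univ⟩
    | succ n ih =>
      rw [hVsucc]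
      exact ⟨hstep1 _ ih.1 ih.2, hstep2 _ ih.1 ih.2⟩
  have hVsub : ∀ n, V (n + 1) ⊆ V n := fun n => by
    rw [hVsucc]; exact hstep3 _ (hVprop n).1 (hVprop n).2
  have hVne : ∀ n, (V n \ V (n + 1)).Nonempty := fun n => by
    rw [hVsucc]; exact hstep4 _ (hVprop n).1 (hVprop n).2
  have hVanti : ∀ {m n : ℕ}, m ≤ n → V n ⊆ V m := by
    intro m n h
    induction n with
    | zero => rw [Nat.le_zero.1 h]
    | succ n ih =>
      rcases Nat.lt_or_ge m (n + 1) with h' | h'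
      · exact (hVsub n).trans (ih (Nat.lt_succ_iff.1 h'))
      · rw [Nat.le_antisymm h h']
  -- the function g
  set g : X → k := fun z => if h : ∃ m, z ∉ V m then a ^ Nat.find h else 0 with hg
  have hgC : ∀ z : X, (∀ m, z ∈ V m) → g z = 0 := by
    intro z hz
    rw [hg]
    simp only [dif_neg (by push_neg; exact hz : ¬∃ m, z ∉ V m)]
  have hgne : ∀ z : X, (∃ m, z ∉ V m) → g z ≠ 0 := by
    intro z hz
    rw [hg]
    simp only [dif_pos hz]
    exact pow_ne_zero _ hane
  have hcont : Continuous g := by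
    rw [continuous_iff_continuousAt]
    intro z
    by_cases hz : ∃ m, z ∉ V m
    · -- locally constant near z
      have hm0 : Nat.find hz ≠ 0 := by
        intro h
        have := Nat.find_spec hz
        rw [h, hV0] at this
        exact this (Set.mem_univ z)
      obtain ⟨m', hmeq⟩ := Nat.exists_eq_succ_of_ne_zero hm0
      have hzU : z ∈ V m' \ V (m' + 1) := by
        constructor
        · by_contra h
          exact (Nat.find_min hz (by omega : m' < Nat.find hz)) h
        · have := Nat.find_spec hz
          rwa [hmeq] at this
      have hUopen : IsOpen (V m' \ V (m' + 1)) :=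
        ((hVprop m').1.isOpen).sdiff (hVprop (m' + 1)).1.isClosed
      have heq : g =ᶠ[nhds z] fun _ => a ^ (m' + 1) := by
        filter_upwards [hUopen.mem_nhds hzU] with w hw
        have hw' : ∃ i, w ∉ V i := ⟨m' + 1, hw.2⟩
        have hfind : Nat.find hw' = m' + 1 := by
          refine le_antisymm (Nat.find_le hw.2) ?_
          by_contra h
          push_neg at h
          exact (Nat.find_spec hw') (hVanti (by omega : Nat.find hw' ≤ m') hw.1)
        rw [hg]
        simp only [dif_pos hw', hfind]
      exact ContinuousAt.congr continuousAt_const heq.symm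
    · -- z in the intersection, g z = 0, tendsto 0
      push_neg at hz
      have hgz : g z = 0 := hgC z hz
      rw [ContinuousAt, hgz, NormedAddCommGroup.tendsto_nhds_zero]
      intro ε hε
      obtain ⟨N, hN⟩ := exists_pow_lt_of_lt_one hε ha1
      filter_upwards [((hVprop N).1.isOpen).mem_nhds (hz N)] with w hw
      by_cases hw' : ∃ i, w ∉ V i
      · have hfind : N ≤ Nat.find hw' := by
          by_contra h
          push_neg at h
          exact (Nat.find_spec hw') (hVanti (by omega : Nat.find hw' ≤ N) hw)
        rw [hg]
        simp only [dif_pos hw', norm_pow]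
        calc ‖a‖ ^ Nat.find hw' ≤ ‖a‖ ^ N :=
              pow_le_pow_of_le_one (norm_nonneg a) ha1.le hfind
          _ < ε := hN
      · rw [hgC w (by push_neg at hw'; exact hw')]
        simpa using hε
  set f : ContinuousMap X k := ⟨g, hcont⟩ with hf
  -- choose points in the differences and a cluster point
  choose y hy using hVne
  obtain ⟨c, hc⟩ := exists_clusterPt_of_compactSpace (Filter.map y Filter.atTop)
  have hcV : ∀ m, c ∈ V m := by
    intro m
    have hle : Filter.map y Filter.atTop ≤ Filter.principal (V m) := by
      rw [Filter.le_principal_iff, Filter.mem_map]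
      exact Filter.mem_of_superset (Filter.mem_atTop m)
        (fun i hi => hVanti hi (hy i).1)
    have := hc.mono hle
    rw [← mem_closure_iff_clusterPt] at this
    exact (hVprop m).1.isClosed.closure_subset this
  -- m_c is a minimal prime
  set mc : Ideal (ContinuousMap X k) := RingHom.ker (cEvalHom X k c) with hmc
  have hsurj : Function.Surjective (cEvalHom X k c) :=
    fun b => ⟨ContinuousMap.const X b, rfl⟩
  have hmcmax : mc.IsMaximal := RingHom.ker_isMaximal_of_surjective _ hsurj
  have hmcprime : mc.IsPrime := hmcmax.isPrime
  obtain ⟨q, hqmin, hqle⟩ := Ideal.exists_minimalPrimes_le (I := (⊥ : Ideal (ContinuousMap X k)))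
    (J := mc) bot_le
  have hqprime : q.IsPrime := hqmin.1.1
  have hqmax : q.IsMaximal := hmax q hqprime (hclosed q hqprime)
  have hqeq : q = mc := hqmax.eq_of_le hmcprime.1 hqle
  rw [hqeq] at hqmin
  -- f ∈ mc
  have hfmc : f ∈ mc := by
    rw [hmc, RingHom.mem_ker]
    exact hgC c hcV
  obtain ⟨s, hs, n, hsfn⟩ := min_prime_ann hqmin hfmc
  -- s c ≠ 0
  have hsc : s c ≠ 0 := by
    rw [hmc, RingHom.mem_ker] at hs
    exact hs
  -- find a point y i near c with s (y i) ≠ 0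
  have hopen : IsOpen {w : X | s w ≠ 0} := isOpen_compl_singleton.preimage s.continuous
  have hccl : c ∈ closure (Set.range y) := by
    rw [mem_closure_iff_clusterPt]
    exact hc.mono (Filter.le_principal_iff.2 (Filter.mem_map.2
      (Filter.mem_of_superset Filter.univ_mem (fun i _ => Set.mem_range_self i))))
  obtain ⟨w, hw1, hw2⟩ := mem_closure_iff.1 hccl _ hopen hsc
  obtain ⟨i, rfl⟩ := hw2
  have hfyi : f (y i) ≠ 0 := hgne (y i) ⟨i + 1, (hy i).2⟩
  have := congrArg (cEvalHom X k (y i)) hsfn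
  rw [map_mul, map_pow, map_zero] at this
  exact (mul_ne_zero hw1 (pow_ne_zero n hfyi)) this
end

section
/- Let $X$ be a non-empty totally disconnected compact Hausdorff space in which every point is a P-point, and let $k$ be a non-Archimedean valued field with non-trivial valuation. Then every bounded continuous function $f \colon X \to k$ has finite image. -/
theorem stmt_18 {X k : Type*} [TopologicalSpace X] [TotallyDisconnectedSpace X]
    [CompactSpace X] [T2Space X] [Nonempty X] [NormedField k] [IsUltrametricDist k]
    (hk : ∃ a : k, 0 < ‖a‖ ∧ ‖a‖ < 1) (hP : ∀ x : X, IsPPoint x)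
    (f : X → k) (hf : Continuous f) (hb : ∃ C : ℝ, ∀ x, ‖f x‖ ≤ C) :
    (Set.range f).Finite := by
  -- every fiber is a neighbourhood of each of its points
  have key : ∀ x : X, f ⁻¹' {f x} ∈ nhds x := by
    intro x
    have h := hP x (Set.range (fun n : ℕ => f ⁻¹' Metric.ball (f x) (1 / (n + 1))))
      (Set.countable_range _) ?_
    · convert h using 1
      rw [Set.sInter_range]
      ext y
      simp only [Set.mem_preimage, Set.mem_singleton_iff, Set.mem_iInter, Metric.mem_ball]
      constructor
      · intro hy n
        rw [hy]
        simp [Nat.cast_add_one_pos]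
      · intro hy
        have : dist (f y) (f x) = 0 := by
          by_contra hne
          have hpos : 0 < dist (f y) (f x) := lt_of_le_of_ne dist_nonneg (Ne.symm hne)
          obtain ⟨n, hn⟩ := exists_nat_one_div_lt hpos
          exact absurd (hy n) (not_lt.mpr hn.le)
        rwa [dist_eq_zero] at this
    · rintro U ⟨n, rfl⟩
      exact hf.continuousAt.preimage_mem_nhds (Metric.ball_mem_nhds _ (by positivity))
  have hopen : ∀ c : k, IsOpen (f ⁻¹' {c}) := by
    intro c
    rw [isOpen_iff_mem_nhds]
    intro x hx
    simp only [Set.mem_preimage, Set.mem_singleton_iff] at hx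
    rw [← hx]
    exact key x
  -- compactness: finite subcover of fibers
  obtain ⟨t, ht⟩ := isCompact_univ.elim_finite_subcover (fun c : k => f ⁻¹' {c})
    (fun c => hopen c) (fun x _ => Set.mem_iUnion.mpr ⟨f x, rfl⟩)
  apply Set.Finite.subset t.finite_toSet
  rintro _ ⟨x, rfl⟩
  obtain ⟨c, hc, hxc⟩ := Set.mem_iUnion₂.mp (ht (Set.mem_univ x))
  simp only [Set.mem_preimage, Set.mem_singleton_iff] at hxc
  exact hxc ▸ hc
end
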